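/- arXiv:1803.07164 — 3 statements merged into one kernel-verified Lean document; each statement's English description precedes it below -/
import Mathlib

section
/- Let H be a metric space (the hypothesis space), and assume the identified set H_I is nonempty. Let F be a finite nonempty set of bounded measurable functions f : 𝒳 → [0,∞), and let γ, κ : [0,∞) → [0,∞). Assume (γ-test property): for every x ∈ 𝒳 there exists f̄ in the convex hull of F (in the vector space of functions 𝒳 → ℝ) such that for every h ∈ H and every ε' ≥ 0, |∫ ρ h ω · f̄(X ω) dP(ω)| ≤ ε' implies |Ψ h x| ≤ γ(ε'). Assume (κ property): for every h ∈ H and ε' ≥ 0, if |Ψ h x| ≤ ε' for all x ∈ 𝒳, then the distance from h to the set H_I is at most κ(ε'). Let ε ≥ 0 and let (h*, σ*) with h* ∈ H and σ* a probability vector on F be an ε-equilibrium of the zero-sum game with loss L, meaning sup_σ L(h*, σ) ≤ inf_{h∈H} sup_σ L(h, σ) + ε and inf_{h∈H} L(h, σ*) ≥ sup_σ inf_{h∈H} L(h, σ) − ε, where sup and inf over σ range over probability vectors on F. Then the distance from h* to H_I is at most κ(γ(√ε)). -/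
open MeasureTheory

/-- A probability vector supported on a finite set `F` of test functions. -/
def IsProbVecOn {α : Type*} (F : Finset α) (σ : α → ℝ) : Prop :=
  (∀ f ∈ F, 0 ≤ σ f ∧ σ f ≤ 1) ∧ ∑ f ∈ F, σ f = 1

/-- **Approximate set identification (Theorem 1).**  Any `ε`-equilibrium `(h*, σ*)` of the
zero-sum game defined by a finite set `F` of `γ`-test functions has its model `h*` within
Hausdorff distance `κ(γ(√ε))` of the identified set. -/
theorem stmt0
    {Ω : Type*} [MeasurableSpace Ω] (P : Measure Ω) [IsProbabilityMeasure P]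
    {𝒳 : Type*} [MeasurableSpace 𝒳] (X : Ω → 𝒳) (hX : Measurable X)
    {H : Type*} [MetricSpace H]
    (ρ : H → Ω → ℝ) (hρ : ∀ h, Integrable (ρ h) P)
    (Ψ : H → 𝒳 → ℝ)
    (hΨ : ∀ (h : H) (f : 𝒳 → ℝ), Measurable f → (∃ C, ∀ x, |f x| ≤ C) →
      ∫ ω, ρ h ω * f (X ω) ∂P = ∫ ω, Ψ h (X ω) * f (X ω) ∂P)
    (HI : Set H) (hHI : HI = {h | ∀ x, Ψ h x = 0}) (hHIne : HI.Nonempty)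
    (F : Finset (𝒳 → ℝ)) (hFne : F.Nonempty)
    (hF : ∀ f ∈ F, Measurable f ∧ (∃ C, ∀ x, |f x| ≤ C) ∧ ∀ x, 0 ≤ f x)
    (γ κ : ℝ → ℝ) (hγ : ∀ t, 0 ≤ t → 0 ≤ γ t) (hκ : ∀ t, 0 ≤ t → 0 ≤ κ t)
    -- `F` is a set of γ-test functions
    (hTest : ∀ x : 𝒳, ∃ fbar ∈ convexHull ℝ (F : Set (𝒳 → ℝ)),
      ∀ (h : H) (ε' : ℝ), 0 ≤ ε' →
        |∫ ω, ρ h ω * fbar (X ω) ∂P| ≤ ε' → |Ψ h x| ≤ γ ε')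
    -- the κ property: small conditional moment violations imply closeness to `HI`
    (hκprop : ∀ (h : H) (ε' : ℝ), 0 ≤ ε' →
      (∀ x, |Ψ h x| ≤ ε') → Metric.infDist h HI ≤ κ ε')
    -- the game loss
    (L : H → ((𝒳 → ℝ) → ℝ) → ℝ)
    (hL : ∀ h σ, L h σ = ∑ f ∈ F, σ f * (∫ ω, ρ h ω * f (X ω) ∂P) ^ 2)
    -- `(hstar, σstar)` is an ε-equilibrium of the zero-sum game
    (ε : ℝ) (hε : 0 ≤ ε) (hstar : H) (σstar : (𝒳 → ℝ) → ℝ)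
    (hσstar : IsProbVecOn F σstar)
    (heq1 : sSup {y | ∃ σ, IsProbVecOn F σ ∧ y = L hstar σ} ≤
      sInf {y | ∃ h : H, y = sSup {z | ∃ σ, IsProbVecOn F σ ∧ z = L h σ}} + ε)
    (heq2 : sInf {y | ∃ h : H, y = L h σstar} ≥
      sSup {y | ∃ σ, IsProbVecOn F σ ∧ y = sInf {z | ∃ h : H, z = L h σ}} - ε) :
    Metric.infDist hstar HI ≤ κ (γ (Real.sqrt ε)) := by

  classical
  obtain ⟨h0, hh0⟩ := hHIne
  obtain ⟨f0, hf0⟩ := hFne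
  set c : H → (𝒳 → ℝ) → ℝ := fun h f => ∫ ω, ρ h ω * f (X ω) ∂P with hc
  -- integrability of each integrand
  have hint : ∀ (h : H) (f : 𝒳 → ℝ), f ∈ F → Integrable (fun ω => ρ h ω * f (X ω)) P := by
    intro h f hf
    obtain ⟨hm, ⟨C, hC⟩, _⟩ := hF f hf
    have := (hρ h).bdd_mul (c := C) ((hm.comp hX).aestronglyMeasurable)
      (ae_of_all _ fun ω => by simpa [Real.norm_eq_abs] using hC (X ω))
    simpa [mul_comm] using this
  -- the moments vanish at h0
  have hz : ∀ x, Ψ h0 x = 0 := by rw [hHI] at hh0; exact hh0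
  have hc0 : ∀ f ∈ F, c h0 f = 0 := by
    intro f hf
    obtain ⟨hm, hb, _⟩ := hF f hf
    have := hΨ h0 f hm hb
    simp only [hc]
    rw [this]
    simp [hz]
  -- dirac prob vectors
  have hdirac : ∀ f ∈ F, IsProbVecOn F (fun g => if g = f then (1:ℝ) else 0) := by
    intro f hf
    constructor
    · intro g _; by_cases h : g = f <;> simp [h]
    · simp [Finset.sum_ite_eq' F f (fun _ => (1:ℝ)), hf]
  have hLdirac : ∀ (h : H), ∀ f ∈ F, L h (fun g => if g = f then (1:ℝ) else 0) = (c h f) ^ 2 := by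
    intro h f hf
    rw [hL]
    rw [Finset.sum_eq_single f]
    · simp; rfl
    · intro g hg hgf; simp [hgf]
    · intro h'; exact absurd hf h'
  -- nonnegativity and boundedness of L over prob vectors
  have hLnn : ∀ (h : H) (σ), IsProbVecOn F σ → 0 ≤ L h σ := by
    intro h σ hσ
    rw [hL]
    exact Finset.sum_nonneg fun f hf => mul_nonneg (hσ.1 f hf).1 (sq_nonneg _)
  have hLle : ∀ (h : H) (σ), IsProbVecOn F σ → L h σ ≤ ∑ f ∈ F, (c h f) ^ 2 := by
    intro h σ hσ
    rw [hL]
    refine Finset.sum_le_sum fun f hf => ?_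
    calc σ f * (c h f) ^ 2 ≤ 1 * (c h f) ^ 2 :=
          mul_le_mul_of_nonneg_right (hσ.1 f hf).2 (sq_nonneg _)
      _ = (c h f) ^ 2 := one_mul _
  have hbddS : ∀ h : H, BddAbove {z | ∃ σ, IsProbVecOn F σ ∧ z = L h σ} := by
    intro h
    exact ⟨∑ f ∈ F, (c h f) ^ 2, fun z ⟨σ, hσ, hzz⟩ => hzz ▸ hLle h σ hσ⟩
  -- the inner sup for h0 is 0
  have hS0 : {z | ∃ σ, IsProbVecOn F σ ∧ z = L h0 σ} = {0} := by
    ext z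
    constructor
    · rintro ⟨σ, hσ, rfl⟩
      have : L h0 σ = 0 := by
        rw [hL]
        refine Finset.sum_eq_zero fun f hf => ?_
        rw [show (∫ ω, ρ h0 ω * f (X ω) ∂P) = c h0 f from rfl, hc0 f hf]
        ring
      simp [this]
    · rintro rfl
      exact ⟨fun g => if g = f0 then 1 else 0, hdirac f0 hf0, by rw [hLdirac h0 f0 hf0, hc0 f0 hf0]; ring⟩
  -- every inner sup is nonneg
  have hSnn : ∀ h : H, 0 ≤ sSup {z | ∃ σ, IsProbVecOn F σ ∧ z = L h σ} := by
    intro h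
    have hmem : (c h f0) ^ 2 ∈ {z | ∃ σ, IsProbVecOn F σ ∧ z = L h σ} :=
      ⟨fun g => if g = f0 then 1 else 0, hdirac f0 hf0, (hLdirac h f0 hf0).symm⟩
    exact le_trans (sq_nonneg _) (le_csSup (hbddS h) hmem)
  -- the inf over h of sups is ≤ 0
  have hInf : sInf {y | ∃ h : H, y = sSup {z | ∃ σ, IsProbVecOn F σ ∧ z = L h σ}} ≤ 0 := by
    have hmem : (0:ℝ) ∈ {y | ∃ h : H, y = sSup {z | ∃ σ, IsProbVecOn F σ ∧ z = L h σ}} :=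
      ⟨h0, by rw [hS0, csSup_singleton]⟩
    refine csInf_le ⟨0, fun y ⟨h, hy⟩ => hy ▸ hSnn h⟩ hmem
  -- hence sup over σ of L hstar is ≤ ε
  have hsup : sSup {y | ∃ σ, IsProbVecOn F σ ∧ y = L hstar σ} ≤ ε := by
    calc _ ≤ sInf {y | ∃ h : H, y = sSup {z | ∃ σ, IsProbVecOn F σ ∧ z = L h σ}} + ε := heq1
      _ ≤ 0 + ε := by linarith
      _ = ε := zero_add ε
  -- each moment of hstar is small
  have hmom : ∀ f ∈ F, |c hstar f| ≤ Real.sqrt ε := by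
    intro f hf
    have hmem : (c hstar f) ^ 2 ∈ {y | ∃ σ, IsProbVecOn F σ ∧ y = L hstar σ} :=
      ⟨fun g => if g = f then 1 else 0, hdirac f hf, (hLdirac hstar f hf).symm⟩
    have h1 : (c hstar f) ^ 2 ≤ ε := le_trans (le_csSup (hbddS hstar) hmem) hsup
    calc |c hstar f| = Real.sqrt ((c hstar f) ^ 2) := (Real.sqrt_sq_eq_abs _).symm
      _ ≤ Real.sqrt ε := Real.sqrt_le_sqrt h1
  -- conclude
  refine hκprop hstar (γ (Real.sqrt ε)) (hγ _ (Real.sqrt_nonneg ε)) fun x => ?_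
  obtain ⟨fbar, hfbar, htest⟩ := hTest x
  refine htest hstar (Real.sqrt ε) (Real.sqrt_nonneg ε) ?_
  rw [Finset.convexHull_eq] at hfbar
  obtain ⟨w, hw0, hw1, hwc⟩ := hfbar
  have hfbar_eval : ∀ y, fbar y = ∑ f ∈ F, w f * f y := by
    intro y
    rw [← hwc, Finset.centerMass_eq_of_sum_1 _ _ hw1]
    simp [Finset.sum_apply]
  have hkey : (∫ ω, ρ hstar ω * fbar (X ω) ∂P) = ∑ f ∈ F, w f * c hstar f := by
    have heq : (fun ω => ρ hstar ω * fbar (X ω))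
        = fun ω => ∑ f ∈ F, w f * (ρ hstar ω * f (X ω)) := by
      funext ω
      rw [hfbar_eval, Finset.mul_sum]
      exact Finset.sum_congr rfl fun f _ => by ring
    rw [heq, integral_finset_sum _ fun f hf => (hint hstar f hf).const_mul (w f)]
    exact Finset.sum_congr rfl fun f hf => integral_const_mul _ _
  rw [hkey]
  calc |∑ f ∈ F, w f * c hstar f| ≤ ∑ f ∈ F, |w f * c hstar f| := Finset.abs_sum_le_sum_abs _ _
    _ ≤ ∑ f ∈ F, w f * Real.sqrt ε := by
        refine Finset.sum_le_sum fun f hf => ?_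
        rw [abs_mul, abs_of_nonneg (hw0 f hf)]
        exact mul_le_mul_of_nonneg_left (hmom f hf) (hw0 f hf)
    _ = Real.sqrt ε := by rw [← Finset.sum_mul, hw1, one_mul]
end

section
/- Let d ≥ 1 be an integer and μ, λ > 0 real numbers. Let P be a probability measure on [0,1]^d ⊆ ℝ^d that is absolutely continuous with respect to Lebesgue measure with density g satisfying g(x) ≥ μ for Lebesgue-almost every x ∈ [0,1]^d. Let ψ : [0,1]^d → ℝ be λ-Lipschitz with respect to the ℓ∞ metric ‖x − y‖_∞ = max_i |x_i − y_i|. Let x₀ ∈ [0,1]^d, h ∈ (0,1], and ε ≥ 0. If |∫ ψ(x) · 1{‖x − x₀‖_∞ ≤ h} dP(x)| ≤ ε, then |ψ(x₀)| ≤ λ·h + ε/(μ·h^d). -/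
open MeasureTheory
open scoped ENNReal

/-- **Lipschitz conditional moments and uniform-kernel test functions.** If `P` is a
probability measure on `[0,1]^d` with Lebesgue density bounded below by `μ` there, `ψ` is
`λ`-Lipschitz on `[0,1]^d` for the `ℓ∞` metric, and the moment against the indicator of the
`ℓ∞` ball of radius `h ∈ (0,1]` around `x₀` is at most `ε` in absolute value, then
`|ψ(x₀)| ≤ λ·h + ε/(μ·h^d)`. (On `Fin d → ℝ`, `dist` is the `ℓ∞` metric.) -/
theorem stmt4
    {d : ℕ} (hd : 1 ≤ d) (μ lam : ℝ) (hμ : 0 < μ) (hlam : 0 < lam)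
    (g : (Fin d → ℝ) → ℝ≥0∞) (hg : Measurable g)
    (P : Measure (Fin d → ℝ)) [IsProbabilityMeasure P]
    (hP : P = volume.withDensity g)
    (hgμ : ∀ᵐ x ∂(volume : Measure (Fin d → ℝ)),
      x ∈ Set.Icc (0 : Fin d → ℝ) 1 → ENNReal.ofReal μ ≤ g x)
    (hsupp : P (Set.Icc (0 : Fin d → ℝ) 1)ᶜ = 0)
    (ψ : (Fin d → ℝ) → ℝ)
    (hψ : ∀ x ∈ Set.Icc (0 : Fin d → ℝ) 1, ∀ y ∈ Set.Icc (0 : Fin d → ℝ) 1,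
      |ψ x - ψ y| ≤ lam * dist x y)
    (x₀ : Fin d → ℝ) (hx₀ : x₀ ∈ Set.Icc (0 : Fin d → ℝ) 1)
    (h : ℝ) (hh : h ∈ Set.Ioc (0 : ℝ) 1) (ε : ℝ) (hε : 0 ≤ ε)
    (hint : |∫ x, ψ x * (Metric.closedBall x₀ h).indicator (fun _ => (1 : ℝ)) x ∂P| ≤ ε) :
    |ψ x₀| ≤ lam * h + ε / (μ * h ^ d) := by
  obtain ⟨hh0, hh1⟩ := hh
  set S : Set (Fin d → ℝ) := Set.Icc 0 1 with hS
  set B : Set (Fin d → ℝ) := Metric.closedBall x₀ h with hB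
  have hBmeas : MeasurableSet B := measurableSet_closedBall
  have hSmeas : MeasurableSet S := measurableSet_Icc
  -- Lipschitz extension
  have hlip : LipschitzOnWith lam.toNNReal ψ S := by
    rw [lipschitzOnWith_iff_dist_le_mul]
    intro x hx y hy
    rw [Real.dist_eq]
    simpa [Real.coe_toNNReal _ hlam.le] using hψ x hx y hy
  obtain ⟨φ, hφlip, hφeq⟩ := hlip.extend_real
  -- volume lower bound on B ∩ S
  have hvol : ENNReal.ofReal (h ^ d) ≤ volume (B ∩ S) := by
    have hBS : B ∩ S = Set.Icc (fun i => (x₀ i - h) ⊔ 0) (fun i => (x₀ i + h) ⊓ 1) := by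
      ext x
      simp only [hB, hS, Set.mem_inter_iff, Metric.mem_closedBall, Set.mem_Icc, Pi.le_def,
        dist_pi_le_iff hh0.le, Real.dist_eq, sup_le_iff, le_inf_iff, Pi.zero_apply, Pi.one_apply]
      constructor
      · rintro ⟨hxB, hx0, hx1⟩
        refine ⟨fun i => ⟨?_, hx0 i⟩, fun i => ⟨?_, hx1 i⟩⟩
        · have := abs_le.1 (hxB i); linarith [this.1]
        · have := abs_le.1 (hxB i); linarith [this.2]
      · rintro ⟨hl, hr⟩
        refine ⟨fun i => ?_, fun i => (hl i).2, fun i => (hr i).2⟩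
        rw [abs_le]
        exact ⟨by linarith [(hl i).1], by linarith [(hr i).1]⟩
    rw [hBS, Real.volume_Icc_pi]
    have : ENNReal.ofReal (h ^ d) = ∏ _i : Fin d, ENNReal.ofReal h := by
      rw [Finset.prod_const, ← ENNReal.ofReal_pow hh0.le]
      simp
    rw [this]
    apply Finset.prod_le_prod' 
    intro i _
    apply ENNReal.ofReal_le_ofReal
    have h0 : 0 ≤ x₀ i := hx₀.1 i
    have h1 : x₀ i ≤ 1 := hx₀.2 i
    rcases le_total (x₀ i - h) 0 with hc | hc
    · rw [sup_eq_right.2 hc]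
      have : h ≤ (x₀ i + h) ⊓ 1 := le_min (by linarith) hh1
      linarith
    · rw [sup_eq_left.2 hc]
      have : x₀ i ≤ (x₀ i + h) ⊓ 1 := le_min (by linarith) h1
      linarith
  -- measure lower bound
  have hPB : ENNReal.ofReal (μ * h ^ d) ≤ P B := by
    have h1 : P (B ∩ S) ≤ P B := measure_mono Set.inter_subset_left
    have h2 : ENNReal.ofReal μ * volume (B ∩ S) ≤ P (B ∩ S) := by
      rw [hP, withDensity_apply _ (hBmeas.inter hSmeas)]
      calc ENNReal.ofReal μ * volume (B ∩ S)
          = ∫⁻ _x in B ∩ S, ENNReal.ofReal μ ∂volume := by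
            rw [setLIntegral_const, mul_comm]
        _ ≤ ∫⁻ x in B ∩ S, g x ∂volume := by
            apply setLIntegral_mono_ae hg.aemeasurable
            filter_upwards [hgμ] with x hx hxBS
            exact hx hxBS.2
    calc ENNReal.ofReal (μ * h ^ d) = ENNReal.ofReal μ * ENNReal.ofReal (h ^ d) := by
          rw [ENNReal.ofReal_mul hμ.le]
      _ ≤ ENNReal.ofReal μ * volume (B ∩ S) := by
          exact mul_le_mul_right hvol _
      _ ≤ P B := h2.trans h1
  set c : ℝ := (P B).toReal with hc
  have hPBne : P B ≠ ⊤ := measure_ne_top P B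
  have hcge : μ * h ^ d ≤ c := by
    rw [hc, ← ENNReal.toReal_ofReal (by positivity : (0:ℝ) ≤ μ * h ^ d)]
    exact ENNReal.toReal_mono hPBne hPB
  have hcpos : 0 < c := lt_of_lt_of_le (by positivity) hcge
  -- integrability
  have hφint : IntegrableOn φ B P :=
    hφlip.continuous.continuousOn.integrableOn_compact (isCompact_closedBall x₀ h)
  -- rewrite the integral
  have haeS : ∀ᵐ x ∂P, x ∈ S := by
    rw [ae_iff]
    exact hsupp
  have hintrw : ∫ x, ψ x * B.indicator (fun _ => (1:ℝ)) x ∂P = ∫ x in B, φ x ∂P := by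
    rw [← integral_indicator hBmeas]
    apply integral_congr_ae
    filter_upwards [haeS] with x hxS
    by_cases hxB : x ∈ B
    · simp [hxB, hφeq hxS]
    · simp [hxB]
  set I : ℝ := ∫ x in B, φ x ∂P with hI
  have hIε : |I| ≤ ε := by rw [← hintrw]; exact hint
  -- main estimate
  have hdiff : |I - ψ x₀ * c| ≤ lam * h * c := by
    have : I - ψ x₀ * c = ∫ x in B, (φ x - ψ x₀) ∂P := by
      rw [integral_sub hφint (integrableOn_const (measure_lt_top _ _).ne)]
      rw [setIntegral_const]
      ring_nf
      simp only [measureReal_def, hc, hI]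
      ring
    rw [this]
    have hrestrict : ((P.restrict B) Set.univ).toReal = c := by
      rw [Measure.restrict_apply_univ]
    calc |∫ x in B, (φ x - ψ x₀) ∂P| ≤ lam * h * ((P.restrict B) Set.univ).toReal := by
          rw [← Real.norm_eq_abs]
          apply norm_integral_le_of_norm_le_const
          rw [ae_restrict_iff' hBmeas]
          apply Filter.Eventually.of_forall
          intro x hxB
          have : |φ x - φ x₀| ≤ lam * dist x x₀ := by
            have := hφlip.dist_le_mul x x₀
            rw [Real.dist_eq] at this
            simpa [Real.coe_toNNReal _ hlam.le] using this
          rw [hφeq hx₀]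
          calc |φ x - φ x₀| ≤ lam * dist x x₀ := this
            _ ≤ lam * h := by
                apply mul_le_mul_of_nonneg_left _ hlam.le
                exact Metric.mem_closedBall.1 hxB
      _ = lam * h * c := by rw [hrestrict]
  -- combine
  have hkey : |ψ x₀| * c ≤ ε + lam * h * c := by
    have : |ψ x₀| * c = |ψ x₀ * c| := by
      rw [abs_mul, abs_of_pos hcpos]
    rw [this]
    calc |ψ x₀ * c| = |I - (I - ψ x₀ * c)| := by ring_nf
      _ ≤ |I| + |I - ψ x₀ * c| := abs_sub _ _
      _ ≤ ε + lam * h * c := add_le_add hIε hdiff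
  have h1 : |ψ x₀| ≤ lam * h + ε / c := by
    rw [← sub_nonneg]
    have := sub_nonneg.2 hkey
    nlinarith [hcpos, div_mul_cancel₀ ε hcpos.ne']
  refine h1.trans (add_le_add_right ?_ _)
  exact div_le_div_of_nonneg_left hε (by positivity) hcge
end

section
/- Let Θ be a nonempty set, F a finite nonempty set, and m, m_n : Θ × F → ℝ functions satisfying |m_n(θ, f) − m(θ, f)| ≤ Δ, |m(θ, f)| ≤ H, and |m_n(θ, f)| ≤ H for all θ ∈ Θ and f ∈ F, where Δ, H ≥ 0. Define the empirical loss L_n(θ, σ) := Σ_{f∈F} σ f · m_n(θ, f)² and the population loss L(θ, σ) := Σ_{f∈F} σ f · m(θ, f)² for probability vectors σ on F. If (θ*, σ*) is an ε-approximate equilibrium of the game on Θ × Δ(F) with loss L_n, then (θ*, σ*) is an (ε + 4HΔ)-approximate equilibrium of the game on Θ × Δ(F) with loss L. -/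
lemma probvec_sum_le {F : Type*} [Fintype F] {σ : F → ℝ}
    (hσ : (∀ f, 0 ≤ σ f ∧ σ f ≤ 1) ∧ ∑ f, σ f = 1)
    {g : F → ℝ} {C : ℝ} (hg : ∀ f, |g f| ≤ C) :
    |∑ f, σ f * g f| ≤ C := by
  calc |∑ f, σ f * g f| ≤ ∑ f, |σ f * g f| := Finset.abs_sum_le_sum_abs _ _
    _ ≤ ∑ f, σ f * C := by
        apply Finset.sum_le_sum
        intro f _
        rw [abs_mul, abs_of_nonneg (hσ.1 f).1]
        exact mul_le_mul_of_nonneg_left (hg f) (hσ.1 f).1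
    _ = C := by rw [← Finset.sum_mul, hσ.2, one_mul]

/-- A probability vector on a finite type `F`. -/
def IsProbVec {F : Type*} [Fintype F] (σ : F → ℝ) : Prop :=
  (∀ f, 0 ≤ σ f ∧ σ f ≤ 1) ∧ ∑ f, σ f = 1

/-- If the empirical moments `m_n` are uniformly `Δ`-close to the population moments `m`
(both bounded by `H`), then any `ε`-approximate equilibrium of the empirical game with loss
`L_n` is an `(ε + 4HΔ)`-approximate equilibrium of the population game with loss `L`. -/
theorem stmt12 {Θ F : Type*} [Nonempty Θ] [Fintype F] [Nonempty F]
    (m mn : Θ → F → ℝ) (Δ H : ℝ) (hΔ : 0 ≤ Δ) (hH : 0 ≤ H)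
    (hclose : ∀ θ f, |mn θ f - m θ f| ≤ Δ)
    (hm : ∀ θ f, |m θ f| ≤ H) (hmn : ∀ θ f, |mn θ f| ≤ H)
    (Ln L : Θ → (F → ℝ) → ℝ)
    (hLn : ∀ θ σ, Ln θ σ = ∑ f, σ f * (mn θ f) ^ 2)
    (hL : ∀ θ σ, L θ σ = ∑ f, σ f * (m θ f) ^ 2)
    (θs : Θ) (σs : F → ℝ) (hσs : IsProbVec σs) (ε : ℝ) (hε : 0 ≤ ε)
    (h1 : Ln θs σs ≤ sInf (Set.range fun θ => Ln θ σs) + ε)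
    (h2 : Ln θs σs ≥ sSup {y | ∃ σ : F → ℝ, IsProbVec σ ∧ y = Ln θs σ} - ε) :
    L θs σs ≤ sInf (Set.range fun θ => L θ σs) + (ε + 4 * H * Δ) ∧
      L θs σs ≥ sSup {y | ∃ σ : F → ℝ, IsProbVec σ ∧ y = L θs σ} - (ε + 4 * H * Δ) := by
  have hsq : ∀ θ f, |mn θ f ^ 2 - m θ f ^ 2| ≤ 2 * H * Δ := by
    intro θ f
    have heq : mn θ f ^ 2 - m θ f ^ 2 = (mn θ f - m θ f) * (mn θ f + m θ f) := by ring
    rw [heq, abs_mul]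
    have hadd : |mn θ f + m θ f| ≤ 2 * H := by
      calc |mn θ f + m θ f| ≤ |mn θ f| + |m θ f| := abs_add_le _ _
        _ ≤ 2 * H := by linarith [hmn θ f, hm θ f]
    calc |mn θ f - m θ f| * |mn θ f + m θ f| ≤ Δ * (2 * H) :=
          mul_le_mul (hclose θ f) hadd (abs_nonneg _) hΔ
      _ = 2 * H * Δ := by ring
  have key : ∀ θ (σ : F → ℝ), IsProbVec σ → |Ln θ σ - L θ σ| ≤ 2 * H * Δ := by
    intro θ σ hσ
    rw [hLn, hL, ← Finset.sum_sub_distrib]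
    have h := probvec_sum_le hσ (g := fun f => mn θ f ^ 2 - m θ f ^ 2)
      (C := 2 * H * Δ) (hsq θ)
    simpa [mul_sub] using h
  -- nonnegativity of Ln on prob vecs
  have hLn_nonneg : ∀ θ, 0 ≤ Ln θ σs := by
    intro θ
    rw [hLn]
    exact Finset.sum_nonneg fun f _ => mul_nonneg (hσs.1 f).1 (sq_nonneg _)
  have hLn_ub : ∀ (σ : F → ℝ), IsProbVec σ → Ln θs σ ≤ H ^ 2 := by
    intro σ hσ
    have h := probvec_sum_le hσ (g := fun f => mn θs f ^ 2) (C := H ^ 2)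
      (fun f => by rw [abs_pow]; exact pow_le_pow_left₀ (abs_nonneg _) (hmn θs f) 2)
    rw [hLn]
    exact le_trans (le_abs_self _) h
  constructor
  · have hle : L θs σs - (ε + 4 * H * Δ) ≤ sInf (Set.range fun θ => L θ σs) := by
      apply le_csInf (Set.range_nonempty _)
      rintro _ ⟨θ, rfl⟩
      have hinf : sInf (Set.range fun θ => Ln θ σs) ≤ Ln θ σs :=
        csInf_le ⟨0, by rintro _ ⟨θ', rfl⟩; exact hLn_nonneg θ'⟩ ⟨θ, rfl⟩
      have k1 := abs_le.1 (key θs σs hσs)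
      have k2 := abs_le.1 (key θ σs hσs)
      linarith
    linarith
  · have hle : sSup {y | ∃ σ : F → ℝ, IsProbVec σ ∧ y = L θs σ}
        ≤ L θs σs + (ε + 4 * H * Δ) := by
      apply csSup_le (Set.nonempty_of_mem (show L θs σs ∈ {y | ∃ σ : F → ℝ, IsProbVec σ ∧ y = L θs σ} from ⟨σs, hσs, rfl⟩))
      rintro _ ⟨σ, hσ, rfl⟩
      have hsup : Ln θs σ ≤ sSup {y | ∃ σ : F → ℝ, IsProbVec σ ∧ y = Ln θs σ} :=
        le_csSup ⟨H ^ 2, by rintro _ ⟨σ', hσ', rfl⟩; exact hLn_ub σ' hσ'⟩ ⟨σ, hσ, rfl⟩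
      have k1 := abs_le.1 (key θs σs hσs)
      have k2 := abs_le.1 (key θs σ hσ)
      linarith
    linarith
end
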